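/- Let ε_1, …, ε_{2m+1} (m ≥ 2) be i.i.d. with Lebesgue density f_ε and cdf F_ε such that E|ε_1|^r < ∞ for some r ≥ 1. Then there exists a constant C (independent of m) such that E[|med(ε_1,…,ε_{2m+1})|^{3r}] ≤ C uniformly in m ≥ 2; i.e., the 3r-th moment of the sample median is finite and uniformly bounded over m. -/

import Mathlib

open MeasureTheory ProbabilityTheory
open scoped ENNReal

section Aux

lemma countP_ofFn' {n : ℕ} (f : Fin n → ℝ) (p : ℝ → Bool) :
    (List.ofFn f).countP p = (Finset.univ.filter (fun i => p (f i) = true)).card := by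
  induction n with
  | zero => simp
  | succ n ih =>
    rw [List.ofFn_succ, List.countP_cons, ih (fun i => f i.succ)]
    rw [Finset.card_filter, Finset.card_filter, Fin.sum_univ_succ]
    simp [Function.comp]
    omega

lemma sorted_get_iff {s : List ℝ} (hs : s.Pairwise (· ≤ ·)) (p : ℝ → Bool)
    (hp : ∀ x y : ℝ, x ≤ y → p y = true → p x = true) {k : ℕ} (hk : k < s.length) :
    p (s.get ⟨k, hk⟩) = true ↔ k + 1 ≤ s.countP p := by
  have hcount : s.countP p
      = (Finset.univ.filter (fun i : Fin s.length => p (s.get i) = true)).card := by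
    conv_lhs => rw [← List.ofFn_get s]
    rw [countP_ofFn']
  constructor
  · intro hpk
    rw [hcount]
    have hsub : Finset.Iic (⟨k, hk⟩ : Fin s.length)
        ⊆ Finset.univ.filter (fun i : Fin s.length => p (s.get i) = true) := by
      intro j hj
      simp only [Finset.mem_Iic] at hj
      simp only [Finset.mem_filter, Finset.mem_univ, true_and]
      exact hp _ _ (hs.rel_get_of_le hj) hpk
    calc k + 1 = (Finset.Iic (⟨k, hk⟩ : Fin s.length)).card := by
          rw [Fin.card_Iic]
      _ ≤ _ := Finset.card_le_card hsub
  · intro hc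
    rw [hcount] at hc
    by_contra hnp
    have hsub : Finset.univ.filter (fun i : Fin s.length => p (s.get i) = true)
        ⊆ Finset.Iio (⟨k, hk⟩ : Fin s.length) := by
      intro j hj
      simp only [Finset.mem_filter, Finset.mem_univ, true_and] at hj
      simp only [Finset.mem_Iio]
      by_contra hjk
      push_neg at hjk
      exact hnp (hp _ _ (hs.rel_get_of_le hjk) hj)
    have := Finset.card_le_card hsub
    simp only [Fin.card_Iio] at this
    omega

lemma med_countP {n k : ℕ} (hk : k < n) (v : Fin n → ℝ) (p : ℝ → Bool)
    (hp : ∀ x y : ℝ, x ≤ y → p y = true → p x = true) :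
    p (((List.ofFn v).insertionSort (· ≤ ·)).getD k 0) = true ↔
      k + 1 ≤ (Finset.univ.filter (fun i => p (v i) = true)).card := by
  set s := (List.ofFn v).insertionSort (· ≤ ·) with hs
  have hlen : s.length = n := by
    rw [hs, List.length_insertionSort, List.length_ofFn]
  have hk' : k < s.length := by omega
  have hgd : s.getD k 0 = s.get ⟨k, hk'⟩ := by
    rw [List.getD_eq_getElem _ _ hk', List.get_eq_getElem]
  rw [hgd, sorted_get_iff (List.pairwise_insertionSort _ _) p hp hk',
    (List.perm_insertionSort (· ≤ ·) (List.ofFn v)).countP_eq, countP_ofFn']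

lemma med_le_iff {n k : ℕ} (hk : k < n) (v : Fin n → ℝ) (t : ℝ) :
    ((List.ofFn v).insertionSort (· ≤ ·)).getD k 0 ≤ t ↔
      k + 1 ≤ (Finset.univ.filter (fun i => v i ≤ t)).card := by
  have := med_countP hk v (fun x => decide (x ≤ t))
    (by intro x y hxy hy; simp_all; linarith)
  simpa using this

lemma med_lt_iff {n k : ℕ} (hk : k < n) (v : Fin n → ℝ) (t : ℝ) :
    ((List.ofFn v).insertionSort (· ≤ ·)).getD k 0 < t ↔
      k + 1 ≤ (Finset.univ.filter (fun i => v i < t)).card := by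
  have := med_countP hk v (fun x => decide (x < t))
    (by intro x y hxy hy; simp_all; linarith)
  simpa using this

lemma med_gt_iff {m : ℕ} (v : Fin (2 * m + 1) → ℝ) (t : ℝ) :
    t < ((List.ofFn v).insertionSort (· ≤ ·)).getD m 0 ↔
      m + 1 ≤ (Finset.univ.filter (fun i => t < v i)).card := by
  have hk : m < 2 * m + 1 := by omega
  rw [← not_le, med_le_iff hk v t, not_le]
  have hsplit := Finset.card_filter_add_card_filter_not
    (s := (Finset.univ : Finset (Fin (2 * m + 1)))) (p := fun i => v i ≤ t)
  have hcard : (Finset.univ : Finset (Fin (2 * m + 1))).card = 2 * m + 1 := by simp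
  have hcongr : (Finset.univ.filter (fun i => ¬ v i ≤ t)).card
      = (Finset.univ.filter (fun i => t < v i)).card := by
    congr 1
    apply Finset.filter_congr
    intro i _
    simp [not_le]
  omega

lemma card_ge_iff {n k : ℕ} (A : Finset (Fin n)) :
    k ≤ A.card ↔ ∃ S ∈ Finset.powersetCard k (Finset.univ : Finset (Fin n)), S ⊆ A := by
  constructor
  · intro h
    obtain ⟨S, hSA, hcard⟩ := Finset.exists_subset_card_eq h
    exact ⟨S, by simp [Finset.mem_powersetCard, hcard], hSA⟩
  · rintro ⟨S, hS, hSA⟩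
    rw [Finset.mem_powersetCard] at hS
    exact hS.2 ▸ Finset.card_le_card hSA

lemma choose_le_two_pow' (n k : ℕ) : n.choose k ≤ 2 ^ n := by
  rcases le_or_gt k n with h | h
  · calc n.choose k ≤ ∑ i ∈ Finset.range (n + 1), n.choose i :=
        Finset.single_le_sum (fun i _ => Nat.zero_le _) (by simp [Finset.mem_range]; omega)
    _ = 2 ^ n := Nat.sum_range_choose n
  · simp [Nat.choose_eq_zero_of_lt h]

lemma meas_card_ge_le {Ω : Type*} [MeasurableSpace Ω] (P : Measure Ω)
    (ε : ℕ → Ω → ℝ) (hmeas : ∀ i, Measurable (ε i))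
    (hindep : iIndepFun ε P)
    (hident : ∀ i, Measure.map (ε i) P = Measure.map (ε 0) P)
    (q : ℝ → Prop) [DecidablePred q] (hq : MeasurableSet {x | q x})
    (n k : ℕ) :
    P {ω | k ≤ (Finset.univ.filter (fun i : Fin n => q (ε ↑i ω))).card}
      ≤ (n.choose k) * P {ω | q (ε 0 ω)} ^ k := by
  classical
  have hsame : ∀ j : ℕ, P (ε j ⁻¹' {x | q x}) = P {ω | q (ε 0 ω)} := by
    intro j
    have h1 : P (ε j ⁻¹' {x | q x}) = Measure.map (ε j) P {x | q x} :=
      (Measure.map_apply (hmeas j) hq).symm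
    rw [h1, hident j, Measure.map_apply (hmeas 0) hq]
    rfl
  have hsub : {ω | k ≤ (Finset.univ.filter (fun i : Fin n => q (ε ↑i ω))).card}
      ⊆ ⋃ S ∈ Finset.powersetCard k (Finset.univ : Finset (Fin n)),
          ⋂ i ∈ S, ε ↑i ⁻¹' {x | q x} := by
    intro ω hω
    obtain ⟨S, hSmem, hSsub⟩ := (card_ge_iff _).mp hω
    refine Set.mem_biUnion hSmem ?_
    simp only [Set.mem_iInter]
    intro i hi
    have := hSsub hi
    simp only [Finset.mem_filter] at this
    exact this.2
  refine le_trans (measure_mono hsub) ?_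
  refine le_trans (measure_biUnion_finset_le _ _) ?_
  have hbound : ∀ S ∈ Finset.powersetCard k (Finset.univ : Finset (Fin n)),
      P (⋂ i ∈ S, ε ↑i ⁻¹' {x | q x}) = P {ω | q (ε 0 ω)} ^ k := by
    intro S hS
    rw [Finset.mem_powersetCard] at hS
    have himg : (⋂ i ∈ S, ε ↑i ⁻¹' {x | q x})
        = ⋂ j ∈ S.image (Fin.val), ε j ⁻¹' {x | q x} := by
      ext ω
      simp only [Set.mem_iInter, Finset.mem_image]
      constructor
      · rintro h j ⟨i, hi, rfl⟩
        exact h i hi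
      · intro h i hi
        exact h ↑i ⟨i, hi, rfl⟩
    rw [himg,
      hindep.measure_inter_preimage_eq_mul (S.image Fin.val)
        (sets := fun _ => {x | q x}) (fun j _ => hq),
      Finset.prod_congr rfl (fun j _ => hsame j), Finset.prod_const,
      Finset.card_image_of_injective _ Fin.val_injective, hS.2]
  rw [Finset.sum_congr rfl hbound, Finset.sum_const, Finset.card_powersetCard,
    Finset.card_univ, Fintype.card_fin, nsmul_eq_mul]

end Aux

/-- Uniform boundedness of the `3r`-th moment of the sample median of `2m+1`
i.i.d. observations with a Lebesgue density, given `E|ε₁|^r < ∞` for some `r ≥ 1`: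
there is a constant `C` (independent of `m`) with
`E[|med(ε₁,…,ε_{2m+1})|^{3r}] ≤ C` for all `m ≥ 2`. -/
theorem median_moment_uniformly_bounded
    {Ω : Type*} [MeasurableSpace Ω] (P : Measure Ω) [IsProbabilityMeasure P]
    (ε : ℕ → Ω → ℝ) (fε : ℝ → ℝ) (r : ℝ) (hr : 1 ≤ r)
    (hfnn : ∀ x, 0 ≤ fε x)
    (hmeas : ∀ i, Measurable (ε i))
    (hindep : iIndepFun ε P)
    (hdist : ∀ i, Measure.map (ε i) P
      = volume.withDensity (fun z => ENNReal.ofReal (fε z)))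
    (hmom : Integrable (fun ω => |ε 0 ω| ^ r) P) :
    ∃ C : ℝ, ∀ m : ℕ, 2 ≤ m →
      ∫ ω, |((List.ofFn fun i : Fin (2 * m + 1) => ε i ω).insertionSort
          (· ≤ ·)).getD m 0| ^ (3 * r) ∂P ≤ C := by
  classical
  have hr0 : (0 : ℝ) < r := by linarith
  have h3r : (0 : ℝ) < 3 * r := by linarith
  have hident : ∀ i, Measure.map (ε i) P = Measure.map (ε 0) P := fun i => by
    rw [hdist i, hdist 0]
  -- the `r`-th moment as a lower integral
  set L : ℝ≥0∞ := ∫⁻ ω, ENNReal.ofReal (|ε 0 ω| ^ r) ∂P with hLdef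
  have habs_meas : Measurable fun ω => |ε 0 ω| := (hmeas 0).abs
  have hLfin : L ≠ ∞ := by
    have h2 : HasFiniteIntegral (fun ω => |ε 0 ω| ^ r) P := hmom.2
    rw [hasFiniteIntegral_iff_ofReal
      (Filter.Eventually.of_forall fun ω => Real.rpow_nonneg (abs_nonneg _) r)] at h2
    exact h2.ne
  set c0 : ℝ := L.toReal with hc0
  have hc0nn : 0 ≤ c0 := ENNReal.toReal_nonneg
  set b : ℝ := c0 + 1 with hbdef
  have hb1 : (1 : ℝ) ≤ b := by linarith
  have hb0 : (0 : ℝ) < b := by linarith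
  set B : ℝ≥0∞ := ENNReal.ofReal b with hBdef
  have hB0 : B ≠ 0 := by
    simp [hBdef, ENNReal.ofReal_eq_zero]; linarith
  have hBtop : B ≠ ∞ := ENNReal.ofReal_ne_top
  have hLB : L ≤ B := by
    calc L = ENNReal.ofReal c0 := (ENNReal.ofReal_toReal hLfin).symm
      _ ≤ B := ENNReal.ofReal_le_ofReal (by linarith)
  set Z : ℝ := (4 * b) ^ (1 / r : ℝ) with hZdef
  have hZ1 : (1 : ℝ) ≤ Z := Real.one_le_rpow (by linarith) (by positivity)
  have hZ0 : (0 : ℝ) < Z := by linarith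
  have hZr : Z ^ r = 4 * b := by
    rw [hZdef, ← Real.rpow_mul (by positivity), one_div_mul_cancel (ne_of_gt hr0),
      Real.rpow_one]
  -- tail probability of a single observation
  set Q : ℝ → ℝ≥0∞ := fun t => P {ω | t < |ε 0 ω|} with hQdef
  have markov : ∀ t : ℝ, 0 < t → ENNReal.ofReal (t ^ r) * Q t ≤ L := by
    intro t ht
    have hsub : {ω | t < |ε 0 ω|}
        ⊆ {ω | ENNReal.ofReal (t ^ r) ≤ ENNReal.ofReal (|ε 0 ω| ^ r)} := by
      intro ω hω
      exact ENNReal.ofReal_le_ofReal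
        (Real.rpow_le_rpow ht.le (le_of_lt hω) hr0.le)
    calc ENNReal.ofReal (t ^ r) * Q t
        ≤ ENNReal.ofReal (t ^ r)
          * P {ω | ENNReal.ofReal (t ^ r) ≤ ENNReal.ofReal (|ε 0 ω| ^ r)} :=
          mul_le_mul_right (measure_mono hsub) _
      _ ≤ L := mul_meas_ge_le_lintegral₀
          (((Real.continuous_rpow_const hr0.le).measurable.comp habs_meas).ennreal_ofReal.aemeasurable) _
  -- layer cake for the single observation
  have lce := lintegral_rpow_eq_lintegral_meas_lt_mul P
    (f := fun ω => |ε 0 ω|) (Filter.Eventually.of_forall fun ω => abs_nonneg _)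
    habs_meas.aemeasurable hr0
  set I : ℝ≥0∞ := ∫⁻ t in Set.Ioi (0:ℝ), P {a | t < |ε 0 a|} * ENNReal.ofReal (t ^ (r - 1)) with hIdef
  have hIB : I ≤ B := by
    have h1 : (1 : ℝ≥0∞) ≤ ENNReal.ofReal r := ENNReal.one_le_ofReal.mpr hr
    calc I = 1 * I := (one_mul I).symm
      _ ≤ ENNReal.ofReal r * I := mul_le_mul_left h1 I
      _ = L := lce.symm
      _ ≤ B := hLB
  refine ⟨3 * r * (Z ^ (3 * r) + 64 * b ^ 3), ?_⟩
  intro m hm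
  set M : Ω → ℝ := fun ω => ((List.ofFn fun i : Fin (2 * m + 1) => ε i ω).insertionSort
      (· ≤ ·)).getD m 0 with hM
  have hkm : m < 2 * m + 1 := by omega
  -- measurability of the median
  have hMmeas : Measurable M := by
    apply measurable_of_Iic
    intro t
    have hset : M ⁻¹' (Set.Iic t)
        = ⋃ S ∈ Finset.powersetCard (m + 1) (Finset.univ : Finset (Fin (2 * m + 1))),
            ⋂ i ∈ S, ε ↑i ⁻¹' Set.Iic t := by
      ext ω
      simp only [Set.mem_preimage, Set.mem_Iic, hM]
      rw [med_le_iff hkm (fun i : Fin (2 * m + 1) => ε ↑i ω) t, card_ge_iff]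
      simp only [Set.mem_iUnion, Set.mem_iInter, Set.mem_preimage, Set.mem_Iic,
        Finset.subset_iff, Finset.mem_filter, Finset.mem_univ, true_and]
      constructor
      · rintro ⟨S, hS, h⟩
        exact ⟨S, hS, fun i hi => h hi⟩
      · rintro ⟨S, hS, h⟩
        exact ⟨S, hS, fun i hi => h i hi⟩
    rw [hset]
    refine (Finset.powersetCard (m + 1) Finset.univ).measurableSet_biUnion ?_
    intro S _
    exact S.measurableSet_biInter fun i _ => (hmeas ↑i) measurableSet_Iic
  -- tail bound for the median
  have tailM : ∀ t : ℝ, 0 < t → P {ω | t < |M ω|} ≤ (4 * Q t) ^ (m + 1) := by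
    intro t ht
    have hq1 : MeasurableSet {x : ℝ | t < x} := measurableSet_Ioi
    have hq2 : MeasurableSet {x : ℝ | x < -t} := measurableSet_Iio
    have hsub : {ω | t < |M ω|}
        ⊆ {ω | m + 1 ≤ (Finset.univ.filter (fun i : Fin (2 * m + 1) => t < ε ↑i ω)).card}
          ∪ {ω | m + 1 ≤ (Finset.univ.filter (fun i : Fin (2 * m + 1) => ε ↑i ω < -t)).card} := by
      intro ω hω
      simp only [Set.mem_setOf_eq] at hω
      rcases lt_abs.mp hω with h | h
      · left
        have := (med_gt_iff (fun i : Fin (2 * m + 1) => ε ↑i ω) t).mp (by rw [← hM] at *; exact h)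
        exact this
      · right
        have hlt : M ω < -t := by linarith
        have := (med_lt_iff hkm (fun i : Fin (2 * m + 1) => ε ↑i ω) (-t)).mp (by rw [← hM] at *; exact hlt)
        exact this
    have h1 := meas_card_ge_le P ε hmeas hindep hident (fun x => t < x) hq1 (2 * m + 1) (m + 1)
    have h2 := meas_card_ge_le P ε hmeas hindep hident (fun x => x < -t) hq2 (2 * m + 1) (m + 1)
    have hq1Q : P {ω | t < ε 0 ω} ≤ Q t :=
      measure_mono fun ω (h : t < ε 0 ω) => lt_of_lt_of_le h (le_abs_self _)
    have hq2Q : P {ω | ε 0 ω < -t} ≤ Q t := by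
      refine measure_mono fun ω (h : ε 0 ω < -t) => ?_
      have : t < -(ε 0 ω) := by linarith
      exact lt_of_lt_of_le this (neg_le_abs _)
    have hchoose : ((2 * m + 1).choose (m + 1) : ℝ≥0∞) ≤ 2 ^ (2 * m + 1) := by
      calc ((2 * m + 1).choose (m + 1) : ℝ≥0∞) ≤ ((2 ^ (2 * m + 1) : ℕ) : ℝ≥0∞) :=
          Nat.cast_le.mpr (choose_le_two_pow' _ _)
        _ = 2 ^ (2 * m + 1) := by push_cast; ring
    calc P {ω | t < |M ω|}
        ≤ P {ω | m + 1 ≤ (Finset.univ.filter (fun i : Fin (2 * m + 1) => t < ε ↑i ω)).card}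
          + P {ω | m + 1 ≤ (Finset.univ.filter (fun i : Fin (2 * m + 1) => ε ↑i ω < -t)).card} :=
          le_trans (measure_mono hsub) (measure_union_le _ _)
      _ ≤ (2 * m + 1).choose (m + 1) * P {ω | t < ε 0 ω} ^ (m + 1)
          + (2 * m + 1).choose (m + 1) * P {ω | ε 0 ω < -t} ^ (m + 1) := add_le_add h1 h2
      _ ≤ 2 ^ (2 * m + 1) * Q t ^ (m + 1) + 2 ^ (2 * m + 1) * Q t ^ (m + 1) :=
          add_le_add (mul_le_mul' hchoose (pow_le_pow_left' hq1Q _))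
            (mul_le_mul' hchoose (pow_le_pow_left' hq2Q _))
      _ = 2 ^ (2 * m + 2) * Q t ^ (m + 1) := by ring
      _ = (4 * Q t) ^ (m + 1) := by
          rw [mul_pow, show (4 : ℝ≥0∞) = 2 ^ 2 by norm_num, ← pow_mul,
            show 2 * (m + 1) = 2 * m + 2 by ring]
  -- refined tail bound past Z
  have tail2 : ∀ t : ℝ, Z ≤ t →
      P {ω | t < |M ω|} ≤ 64 * B ^ 2 * ((ENNReal.ofReal (t ^ r))⁻¹) ^ 2 * Q t := by
    intro t hZt
    have ht0 : (0 : ℝ) < t := lt_of_lt_of_le hZ0 hZt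
    set X : ℝ≥0∞ := ENNReal.ofReal (t ^ r) with hX
    have hX0 : X ≠ 0 := by
      simp [hX, ENNReal.ofReal_eq_zero, not_le]
      positivity
    have hXtop : X ≠ ∞ := ENNReal.ofReal_ne_top
    have hQle : Q t ≤ X⁻¹ * B := by
      have h1 : X * Q t ≤ B := le_trans (markov t ht0) hLB
      calc Q t = X⁻¹ * (X * Q t) := by
            rw [← mul_assoc, ENNReal.inv_mul_cancel hX0 hXtop, one_mul]
        _ ≤ X⁻¹ * B := mul_le_mul_right h1 _
    have hXZ : ENNReal.ofReal (Z ^ r) ≤ X :=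
      ENNReal.ofReal_le_ofReal (Real.rpow_le_rpow hZ0.le hZt hr0.le)
    have hZrB : ENNReal.ofReal (Z ^ r) = 4 * B := by
      rw [hZr, hBdef, ENNReal.ofReal_mul (by norm_num : (0:ℝ) ≤ 4)]
      congr 1
      exact ENNReal.ofReal_ofNat 4
    have h4Q : 4 * Q t ≤ 1 := by
      have hXinv : X⁻¹ ≤ (4 * B)⁻¹ := by
        rw [← hZrB]
        exact ENNReal.inv_le_inv' hXZ
      calc 4 * Q t ≤ 4 * (X⁻¹ * B) := mul_le_mul_right hQle _
        _ ≤ 4 * ((4 * B)⁻¹ * B) := mul_le_mul_right (mul_le_mul_left hXinv _) _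
        _ = (4 * B) * ((4 * B)⁻¹) := by ac_rfl
        _ = 1 := ENNReal.mul_inv_cancel (mul_ne_zero (by norm_num) hB0)
            (ENNReal.mul_ne_top (by simp) hBtop)
    calc P {ω | t < |M ω|} ≤ (4 * Q t) ^ (m + 1) := tailM t ht0
      _ = (4 * Q t) ^ (m - 2) * (4 * Q t) ^ 3 := by
          rw [← pow_add]
          congr 1
          omega
      _ ≤ 1 * (4 * Q t) ^ 3 := mul_le_mul_left (pow_le_one' h4Q _) _
      _ = 64 * (Q t * Q t * Q t) := by ring
      _ ≤ 64 * ((X⁻¹ * B) * (X⁻¹ * B) * Q t) :=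
          mul_le_mul_right (mul_le_mul' (mul_le_mul' hQle hQle) le_rfl) _
      _ = 64 * B ^ 2 * (X⁻¹) ^ 2 * Q t := by ring
  -- layer cake for the median
  have lcM := lintegral_rpow_eq_lintegral_meas_lt_mul P
    (f := fun ω => |M ω|) (Filter.Eventually.of_forall fun ω => abs_nonneg _)
    hMmeas.abs.aemeasurable h3r
  -- split the outer integral at Z
  have hsplit : ∫⁻ t in Set.Ioi (0:ℝ), P {a | t < |M a|} * ENNReal.ofReal (t ^ (3 * r - 1))
      = (∫⁻ t in Set.Ioc (0:ℝ) Z, P {a | t < |M a|} * ENNReal.ofReal (t ^ (3 * r - 1)))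
        + ∫⁻ t in Set.Ioi Z, P {a | t < |M a|} * ENNReal.ofReal (t ^ (3 * r - 1)) := by
    rw [← Set.Ioc_union_Ioi_eq_Ioi hZ0.le,
      lintegral_union measurableSet_Ioi (Set.Ioc_disjoint_Ioi le_rfl)]
  have hhead : (∫⁻ t in Set.Ioc (0:ℝ) Z, P {a | t < |M a|} * ENNReal.ofReal (t ^ (3 * r - 1)))
      ≤ ENNReal.ofReal (Z ^ (3 * r)) := by
    calc (∫⁻ t in Set.Ioc (0:ℝ) Z, P {a | t < |M a|} * ENNReal.ofReal (t ^ (3 * r - 1)))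
        ≤ ∫⁻ _ in Set.Ioc (0:ℝ) Z, ENNReal.ofReal (Z ^ (3 * r - 1)) := by
          refine setLIntegral_mono' measurableSet_Ioc fun t ht => ?_
          calc P {a | t < |M a|} * ENNReal.ofReal (t ^ (3 * r - 1))
              ≤ 1 * ENNReal.ofReal (Z ^ (3 * r - 1)) :=
              mul_le_mul' prob_le_one
                (ENNReal.ofReal_le_ofReal
                  (Real.rpow_le_rpow ht.1.le ht.2 (by linarith)))
            _ = ENNReal.ofReal (Z ^ (3 * r - 1)) := one_mul _
      _ = ENNReal.ofReal (Z ^ (3 * r - 1)) * volume (Set.Ioc (0:ℝ) Z) :=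
          setLIntegral_const _ _
      _ = ENNReal.ofReal (Z ^ (3 * r - 1)) * ENNReal.ofReal Z := by
          rw [Real.volume_Ioc, sub_zero]
      _ = ENNReal.ofReal (Z ^ (3 * r - 1) * Z) :=
          (ENNReal.ofReal_mul (Real.rpow_nonneg hZ0.le _)).symm
      _ = ENNReal.ofReal (Z ^ (3 * r)) := by
          congr 1
          have h1 : Z ^ (3 * r - 1) * Z = Z ^ (3 * r - 1) * Z ^ (1 : ℝ) := by
            rw [Real.rpow_one]
          rw [h1, ← Real.rpow_add hZ0]
          norm_num
  have htail : (∫⁻ t in Set.Ioi Z, P {a | t < |M a|} * ENNReal.ofReal (t ^ (3 * r - 1)))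
      ≤ 64 * B ^ 3 := by
    have hstep : ∀ t ∈ Set.Ioi Z,
        P {a | t < |M a|} * ENNReal.ofReal (t ^ (3 * r - 1))
          ≤ 64 * B ^ 2 * (P {a | t < |ε 0 a|} * ENNReal.ofReal (t ^ (r - 1))) := by
      intro t ht
      have ht' : Z ≤ t := le_of_lt ht
      have ht0 : (0 : ℝ) < t := lt_of_lt_of_le hZ0 ht'
      set X : ℝ≥0∞ := ENNReal.ofReal (t ^ r) with hX
      have hX0 : X ≠ 0 := by
        simp [hX, ENNReal.ofReal_eq_zero, not_le]
        positivity
      have hXtop : X ≠ ∞ := ENNReal.ofReal_ne_top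
      have hXX : X⁻¹ * X = 1 := ENNReal.inv_mul_cancel hX0 hXtop
      have hsplit3 : ENNReal.ofReal (t ^ (3 * r - 1))
          = ENNReal.ofReal (t ^ (r - 1)) * X * X := by
        rw [hX, ← ENNReal.ofReal_mul (Real.rpow_nonneg ht0.le _),
          ← ENNReal.ofReal_mul (by positivity),
          ← Real.rpow_add ht0, ← Real.rpow_add ht0]
        congr 1
        ring_nf
      calc P {a | t < |M a|} * ENNReal.ofReal (t ^ (3 * r - 1))
          ≤ (64 * B ^ 2 * (X⁻¹) ^ 2 * Q t) * ENNReal.ofReal (t ^ (3 * r - 1)) :=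
            mul_le_mul_left (tail2 t ht') _
        _ = 64 * B ^ 2 * (Q t * ENNReal.ofReal (t ^ (r - 1))) * ((X⁻¹ * X) * (X⁻¹ * X)) := by
            rw [hsplit3]
            ring
        _ = 64 * B ^ 2 * (Q t * ENNReal.ofReal (t ^ (r - 1))) := by
            rw [hXX, one_mul, mul_one]
        _ = 64 * B ^ 2 * (P {a | t < |ε 0 a|} * ENNReal.ofReal (t ^ (r - 1))) := rfl
    calc (∫⁻ t in Set.Ioi Z, P {a | t < |M a|} * ENNReal.ofReal (t ^ (3 * r - 1)))
        ≤ ∫⁻ t in Set.Ioi Z, 64 * B ^ 2 * (P {a | t < |ε 0 a|} * ENNReal.ofReal (t ^ (r - 1))) :=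
          setLIntegral_mono' measurableSet_Ioi hstep
      _ = 64 * B ^ 2 * ∫⁻ t in Set.Ioi Z, P {a | t < |ε 0 a|} * ENNReal.ofReal (t ^ (r - 1)) :=
          lintegral_const_mul' _ _
            (ENNReal.mul_ne_top (by simp) (ENNReal.pow_ne_top hBtop))
      _ ≤ 64 * B ^ 2 * I := by
          refine mul_le_mul_right ?_ _
          rw [hIdef]
          exact lintegral_mono' (Measure.restrict_mono (Set.Ioi_subset_Ioi hZ0.le) le_rfl) le_rfl
      _ ≤ 64 * B ^ 2 * B := mul_le_mul_right hIB _
      _ = 64 * B ^ 3 := by ring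
  -- put everything together
  have hfinal : (∫⁻ ω, ENNReal.ofReal (|M ω| ^ (3 * r)) ∂P)
      ≤ ENNReal.ofReal (3 * r * (Z ^ (3 * r) + 64 * b ^ 3)) := by
    rw [lcM, hsplit]
    have hsum : (∫⁻ t in Set.Ioc (0:ℝ) Z, P {a | t < |M a|} * ENNReal.ofReal (t ^ (3 * r - 1)))
        + (∫⁻ t in Set.Ioi Z, P {a | t < |M a|} * ENNReal.ofReal (t ^ (3 * r - 1)))
        ≤ ENNReal.ofReal (Z ^ (3 * r) + 64 * b ^ 3) := by
      rw [ENNReal.ofReal_add (Real.rpow_nonneg hZ0.le _) (by positivity)]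
      refine add_le_add hhead (le_trans htail ?_)
      rw [hBdef, ← ENNReal.ofReal_pow hb0.le,
        show ((64 : ℝ≥0∞)) = ENNReal.ofReal 64 from (ENNReal.ofReal_ofNat 64).symm,
        ← ENNReal.ofReal_mul (by norm_num)]
    calc ENNReal.ofReal (3 * r) * ((∫⁻ t in Set.Ioc (0:ℝ) Z, P {a | t < |M a|} * ENNReal.ofReal (t ^ (3 * r - 1)))
          + ∫⁻ t in Set.Ioi Z, P {a | t < |M a|} * ENNReal.ofReal (t ^ (3 * r - 1)))
        ≤ ENNReal.ofReal (3 * r) * ENNReal.ofReal (Z ^ (3 * r) + 64 * b ^ 3) :=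
          mul_le_mul_right hsum _
      _ = ENNReal.ofReal (3 * r * (Z ^ (3 * r) + 64 * b ^ 3)) :=
          (ENNReal.ofReal_mul h3r.le).symm
  have hint : ∫ ω, |M ω| ^ (3 * r) ∂P
      = (∫⁻ ω, ENNReal.ofReal (|M ω| ^ (3 * r)) ∂P).toReal := by
    rw [integral_eq_lintegral_of_nonneg_ae
      (Filter.Eventually.of_forall fun ω => Real.rpow_nonneg (abs_nonneg _) _)
      ((Real.continuous_rpow_const h3r.le).measurable.comp hMmeas.abs).aestronglyMeasurable]
  calc ∫ ω, |((List.ofFn fun i : Fin (2 * m + 1) => ε i ω).insertionSort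
          (· ≤ ·)).getD m 0| ^ (3 * r) ∂P
      = ∫ ω, |M ω| ^ (3 * r) ∂P := by simp only [hM]
    _ ≤ 3 * r * (Z ^ (3 * r) + 64 * b ^ 3) := by
        rw [hint]
        exact ENNReal.toReal_le_of_le_ofReal (by positivity) hfinal
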